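/- In ℝ^r with the standard inner product, let Δ = C_r = {±2e_i : 1 ≤ i ≤ r} ∪ {±e_i ± e_j : 1 ≤ i < j ≤ r} (r ≥ 2), with fundamental system Π = {α_i = e_i − e_{i+1} : 1 ≤ i ≤ r−1} ∪ {α_r = 2e_r}, and let α^l ∈ ℝ^r be determined by ⟨α^l, α_j⟩ = δ_{lj}. Then, with Y = (π/2)α^l: for 1 ≤ l ≤ r−1, Σ_Y = {±2e_i : 1 ≤ i ≤ r} ∪ {±e_i ± e_j : 1 ≤ i < j ≤ l} ∪ {±e_i ± e_j : l < i < j ≤ r} (the root system C_l ∪ C_{r−l}); and for l = r, Σ_Y = {±(e_i − e_j) : 1 ≤ i < j ≤ r} (a root system of type A_{r−1} consisting of short roots). -/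
import Mathlib


open RealInnerProductSpace

/-- **Computation of `Σ_Y` for `Δ = C_r` (`r = m + 1 ≥ 2`) and `Y = (π/2) αˡ`.**
With the standard basis `e` of `ℝ^r`, `Δ = {±2e_i} ∪ {±e_i ± e_j : i < j}`, simple roots
`α_i = e_i − e_{i+1}` (for `i < r − 1`) and `α_{r−1} = 2e_{r−1}` (0-based), and `d = αˡ`
the dual vector of the simple root with 0-based index `l`:
if `l < m` (1-based `1 ≤ l ≤ r − 1`), then
`Σ_Y = {±2e_i : all i} ∪ {±e_i ± e_j : i < j ≤ l} ∪ {±e_i ± e_j : l < i < j}`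
(the root system `C_{l+1} ∪ C_{r−l−1}`); if `l = m` (1-based `l = r`), then
`Σ_Y = {±(e_i − e_j) : i < j}` (a root system of type `A_{r−1}` of short roots). -/
theorem stmt_9 (m : ℕ) (hm : 1 ≤ m)
    (e : Fin (m + 1) → EuclideanSpace ℝ (Fin (m + 1)))
    (he : ∀ i, e i = EuclideanSpace.single i (1 : ℝ))
    (Δ : Set (EuclideanSpace ℝ (Fin (m + 1))))
    (hΔ : Δ = {v | ∃ (s : ℝ) (i : Fin (m + 1)), (s = 2 ∨ s = -2) ∧ v = s • e i} ∪
      {v | ∃ (s t : ℝ) (i j : Fin (m + 1)), (s = 1 ∨ s = -1) ∧ (t = 1 ∨ t = -1) ∧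
        i < j ∧ v = s • e i + t • e j})
    (α : Fin (m + 1) → EuclideanSpace ℝ (Fin (m + 1)))
    (hα : ∀ i : Fin m, α i.castSucc = e i.castSucc - e i.succ)
    (hαlast : α (Fin.last m) = (2 : ℝ) • e (Fin.last m))
    (l : Fin (m + 1))
    (d : EuclideanSpace ℝ (Fin (m + 1)))
    (hd : ∀ j, ⟪d, α j⟫ = if j = l then 1 else 0)
    (Y : EuclideanSpace ℝ (Fin (m + 1))) (hY : Y = (Real.pi / 2) • d) :
    ((l : ℕ) < m →
      {lam | lam ∈ Δ ∧ ∃ k : ℤ, ⟪lam, Y⟫ = (k : ℝ) * Real.pi} =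
        {v | ∃ (s : ℝ) (i : Fin (m + 1)), (s = 2 ∨ s = -2) ∧ v = s • e i} ∪
        {v | ∃ (s t : ℝ) (i j : Fin (m + 1)), (s = 1 ∨ s = -1) ∧ (t = 1 ∨ t = -1) ∧
          i < j ∧ (j : ℕ) ≤ (l : ℕ) ∧ v = s • e i + t • e j} ∪
        {v | ∃ (s t : ℝ) (i j : Fin (m + 1)), (s = 1 ∨ s = -1) ∧ (t = 1 ∨ t = -1) ∧
          (l : ℕ) < (i : ℕ) ∧ i < j ∧ v = s • e i + t • e j}) ∧
    ((l : ℕ) = m →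
      {lam | lam ∈ Δ ∧ ∃ k : ℤ, ⟪lam, Y⟫ = (k : ℝ) * Real.pi} =
        {v | ∃ i j : Fin (m + 1), i < j ∧ (v = e i - e j ∨ v = e j - e i)}) := by
  have hπ : Real.pi ≠ 0 := Real.pi_ne_zero
  have hde : ∀ i, ⟪d, e i⟫ = d i := by
    intro i; rw [he, EuclideanSpace.inner_single_right]; simp
  have hed : ∀ i, ⟪e i, d⟫ = d i := by
    intro i; rw [real_inner_comm]; exact hde i
  have hstep : ∀ i : Fin m, d i.castSucc = d i.succ + (if i.castSucc = l then 1 else 0) := by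
    intro i
    have h := hd i.castSucc
    rw [hα, inner_sub_right, hde, hde] at h
    linarith
  have hlast : 2 * d (Fin.last m) = if Fin.last m = l then 1 else 0 := by
    have h := hd (Fin.last m)
    rw [hαlast, real_inner_smul_right, hde] at h
    linarith
  have hinner1 : ∀ (s : ℝ) i, ⟪s • e i, Y⟫ = Real.pi / 2 * (s * d i) := by
    intro s i
    rw [hY, real_inner_smul_right, real_inner_smul_left, hed]
  have hinner2 : ∀ (s t : ℝ) i j, ⟪s • e i + t • e j, Y⟫ =
      Real.pi / 2 * (s * d i + t * d j) := by
    intro s t i j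
    rw [hY, real_inner_smul_right, inner_add_left, real_inner_smul_left,
      real_inner_smul_left, hed, hed]
  constructor
  · -- case l < m
    intro hl
    have hdv : ∀ i : Fin (m+1), d i = if (i:ℕ) ≤ (l:ℕ) then 1 else 0 := by
      have key : ∀ n, ∀ i : Fin (m+1), (i:ℕ) = m - n →
          d i = if (i:ℕ) ≤ (l:ℕ) then 1 else 0 := by
        intro n
        induction n with
        | zero =>
          intro i hi
          have hil : i = Fin.last m := Fin.ext (by simpa using hi)
          subst hil
          have hne : Fin.last m ≠ l := by
            intro h'; rw [← h'] at hl; simp [Fin.last] at hl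
          rw [if_neg hne] at hlast
          have h0 : d (Fin.last m) = 0 := by linarith
          rw [h0, if_neg]
          simp [Fin.last]; omega
        | succ n ih =>
          intro i hi
          by_cases hn : n + 1 ≤ m
          · have hlt : (i:ℕ) < m := by omega
            have hs := hstep ⟨i, hlt⟩
            have hc : (⟨i, hlt⟩ : Fin m).castSucc = i := Fin.ext rfl
            rw [hc] at hs
            have hsucc : ((⟨i, hlt⟩ : Fin m).succ : ℕ) = m - n := by
              simp [Fin.succ]; omega
            have ihv := ih (⟨i, hlt⟩ : Fin m).succ hsucc
            rw [ihv] at hs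
            rw [hs, hsucc]
            by_cases hil : i = l
            · have hv : (i:ℕ) = (l:ℕ) := by rw [hil]
              rw [if_pos hil, if_neg (by omega), if_pos (by omega)]; norm_num
            · have hv : (i:ℕ) ≠ (l:ℕ) := fun h => hil (Fin.ext h)
              rw [if_neg hil]
              by_cases h2 : (i:ℕ) ≤ (l:ℕ)
              · rw [if_pos (by omega), if_pos h2]; norm_num
              · rw [if_neg (by omega), if_neg h2]; norm_num
          · exact ih i (by omega)
      intro i
      exact key (m - i) i (by omega)
    ext v
    simp only [Set.mem_setOf_eq, Set.mem_union, hΔ]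
    constructor
    · rintro ⟨hv, k, hk⟩
      rcases hv with ⟨s, i, hs, rfl⟩ | ⟨s, t, i, j, hs, ht, hij, rfl⟩
      · exact Or.inl (Or.inl ⟨s, i, hs, rfl⟩)
      · rw [hinner2] at hk
        have hX : s * d i + t * d j = 2 * (k : ℝ) := by
          have h2 : Real.pi * (s * d i + t * d j) = Real.pi * (2 * (k:ℝ)) := by
            linear_combination 2 * hk
          exact mul_left_cancel₀ hπ h2
        by_cases hj : (j:ℕ) ≤ (l:ℕ)
        · exact Or.inl (Or.inr ⟨s, t, i, j, hs, ht, hij, hj, rfl⟩)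
        · by_cases hi : (l:ℕ) < (i:ℕ)
          · exact Or.inr ⟨s, t, i, j, hs, ht, hi, hij, rfl⟩
          · exfalso
            have h1 : d i = 1 := by rw [hdv]; rw [if_pos (by omega)]
            have h0 : d j = 0 := by rw [hdv]; rw [if_neg (by omega)]
            rw [h1, h0] at hX
            rcases hs with rfl | rfl
            · have : (1:ℤ) = 2 * k := by exact_mod_cast (by linarith : (1:ℝ) = 2 * k)
              omega
            · have : (-1:ℤ) = 2 * k := by exact_mod_cast (by linarith : (-1:ℝ) = 2 * k)
              omega
    · rintro ((⟨s, i, hs, rfl⟩ | ⟨s, t, i, j, hs, ht, hij, hjl, rfl⟩) |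
        ⟨s, t, i, j, hs, ht, hli, hij, rfl⟩)
      · refine ⟨Or.inl ⟨s, i, hs, rfl⟩, ?_⟩
        by_cases hi : (i:ℕ) ≤ (l:ℕ)
        · have h1 : d i = 1 := by rw [hdv, if_pos hi]
          rcases hs with rfl | rfl
          · exact ⟨1, by rw [hinner1, h1]; push_cast; ring⟩
          · exact ⟨-1, by rw [hinner1, h1]; push_cast; ring⟩
        · have h0 : d i = 0 := by rw [hdv, if_neg hi]
          exact ⟨0, by rw [hinner1, h0]; push_cast; ring⟩
      · refine ⟨Or.inr ⟨s, t, i, j, hs, ht, hij, rfl⟩, ?_⟩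
        have h1 : d i = 1 := by
          rw [hdv, if_pos (by have := hij; omega : (i:ℕ) ≤ (l:ℕ))]
        have h2 : d j = 1 := by rw [hdv, if_pos hjl]
        rcases hs with rfl | rfl <;> rcases ht with rfl | rfl
        · exact ⟨1, by rw [hinner2, h1, h2]; push_cast; ring⟩
        · exact ⟨0, by rw [hinner2, h1, h2]; push_cast; ring⟩
        · exact ⟨0, by rw [hinner2, h1, h2]; push_cast; ring⟩
        · exact ⟨-1, by rw [hinner2, h1, h2]; push_cast; ring⟩
      · refine ⟨Or.inr ⟨s, t, i, j, hs, ht, hij, rfl⟩, ?_⟩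
        have h1 : d i = 0 := by rw [hdv, if_neg (by omega)]
        have h2 : d j = 0 := by
          rw [hdv, if_neg (by have := hij; omega : ¬ (j:ℕ) ≤ (l:ℕ))]
        exact ⟨0, by rw [hinner2, h1, h2]; push_cast; ring⟩
  · -- case l = m
    intro hl
    have hdv : ∀ i : Fin (m+1), d i = 1 / 2 := by
      have key : ∀ n, ∀ i : Fin (m+1), (i:ℕ) = m - n → d i = 1 / 2 := by
        intro n
        induction n with
        | zero =>
          intro i hi
          have hil : i = Fin.last m := Fin.ext (by simpa using hi)
          subst hil
          have heq : Fin.last m = l := Fin.ext (by simp [Fin.last, hl])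
          rw [if_pos heq] at hlast
          linarith
        | succ n ih =>
          intro i hi
          by_cases hn : n + 1 ≤ m
          · have hlt : (i:ℕ) < m := by omega
            have hs := hstep ⟨i, hlt⟩
            have hc : (⟨i, hlt⟩ : Fin m).castSucc = i := Fin.ext rfl
            rw [hc] at hs
            have hsucc : ((⟨i, hlt⟩ : Fin m).succ : ℕ) = m - n := by
              simp [Fin.succ]; omega
            have ihv := ih (⟨i, hlt⟩ : Fin m).succ hsucc
            have hne : i ≠ l := by
              intro h'
              have : (i:ℕ) = (l:ℕ) := by rw [h']
              omega
            rw [ihv, if_neg hne] at hs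
            rw [hs]; ring
          · exact ih i (by omega)
      intro i
      exact key (m - i) i (by omega)
    ext v
    simp only [Set.mem_setOf_eq, Set.mem_union, hΔ]
    constructor
    · rintro ⟨hv, k, hk⟩
      rcases hv with ⟨s, i, hs, rfl⟩ | ⟨s, t, i, j, hs, ht, hij, rfl⟩
      · exfalso
        rw [hinner1, hdv] at hk
        have hX : s = 4 * (k : ℝ) := by
          have h2 : Real.pi * s = Real.pi * (4 * (k:ℝ)) := by
            linear_combination 4 * hk
          exact mul_left_cancel₀ hπ h2
        rcases hs with rfl | rfl
        · have : (2:ℤ) = 4 * k := by exact_mod_cast hX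
          omega
        · have : (-2:ℤ) = 4 * k := by exact_mod_cast hX
          omega
      · rw [hinner2, hdv, hdv] at hk
        have hX : s + t = 4 * (k : ℝ) := by
          have h2 : Real.pi * (s + t) = Real.pi * (4 * (k:ℝ)) := by
            linear_combination 4 * hk
          exact mul_left_cancel₀ hπ h2
        rcases hs with rfl | rfl <;> rcases ht with rfl | rfl
        · exfalso
          have : (2:ℤ) = 4 * k := by exact_mod_cast (by linarith : (2:ℝ) = 4 * k)
          omega
        · exact ⟨i, j, hij, Or.inl (by module)⟩
        · exact ⟨i, j, hij, Or.inr (by module)⟩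
        · exfalso
          have : (-2:ℤ) = 4 * k := by exact_mod_cast (by linarith : (-2:ℝ) = 4 * k)
          omega
    · rintro ⟨i, j, hij, rfl | rfl⟩
      · refine ⟨Or.inr ⟨1, -1, i, j, Or.inl rfl, Or.inr rfl, hij, by module⟩, 0, ?_⟩
        have hv : e i - e j = (1:ℝ) • e i + (-1:ℝ) • e j := by module
        rw [hv, hinner2, hdv, hdv]; push_cast; ring
      · refine ⟨Or.inr ⟨-1, 1, i, j, Or.inr rfl, Or.inl rfl, hij, by module⟩, 0, ?_⟩
        have hv : e j - e i = (-1:ℝ) • e i + (1:ℝ) • e j := by module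
        rw [hv, hinner2, hdv, hdv]; push_cast; ring
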